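/- arXiv:1805.00887 — 2 statements merged into one kernel-verified Lean document; each statement's English description precedes it below -/
import Mathlib

section
/- Let (X,d) be a compact metric space, 𝕀 = {S_1,...,S_N} an IFS of contractions on X with compact condensation set C. Then dim_H F_C = max{dim_H F_∅, dim_H C}. -/
open Metric Filter Set MeasureTheory Topology

/-- The upper Lipschitz constant `Lip⁺(S) = sup_{x ≠ y} d(S x, S y)/d(x,y)`. -/
noncomputable def LipPlus {X : Type*} [MetricSpace X] (S : X → X) : ℝ :=
  sSup {r : ℝ | ∃ x y : X, x ≠ y ∧ r = dist (S x) (S y) / dist x y}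

/-- The lower Lipschitz constant `Lip⁻(S) = inf_{x ≠ y} d(S x, S y)/d(x,y)`. -/
noncomputable def LipMinus {X : Type*} [MetricSpace X] (S : X → X) : ℝ :=
  sInf {r : ℝ | ∃ x y : X, x ≠ y ∧ r = dist (S x) (S y) / dist x y}

/-- `S` is a bi-Lipschitz contraction: `0 < Lip⁻(S) ≤ Lip⁺(S) < 1`,
with `Lip⁺(S)` and `Lip⁻(S)` genuine upper/lower Lipschitz bounds. -/
def IsBiLipContraction {X : Type*} [MetricSpace X] (S : X → X) : Prop :=
  (∀ x y : X, dist (S x) (S y) ≤ LipPlus S * dist x y) ∧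
  (∀ x y : X, LipMinus S * dist x y ≤ dist (S x) (S y)) ∧
  0 < LipMinus S ∧ LipMinus S ≤ LipPlus S ∧ LipPlus S < 1

/-- `S_𝐢 = S_{i₁} ∘ ⋯ ∘ S_{i_k}` for a finite word `𝐢` over `{1,…,N}`. -/
def compList {X : Type*} {N : ℕ} (S : Fin N → X → X) : List (Fin N) → X → X
  | [] => id
  | i :: w => S i ∘ compList S w

/-- `S` is a contraction: Lipschitz with some constant `c < 1`. -/
def IsContractionMap {X : Type*} [MetricSpace X] (S : X → X) : Prop :=
  ∃ c : ℝ, 0 ≤ c ∧ c < 1 ∧ ∀ x y : X, dist (S x) (S y) ≤ c * dist x y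

lemma compList_append {X : Type*} {N : ℕ} (S : Fin N → X → X) (w v : List (Fin N)) :
    compList S (w ++ v) = compList S w ∘ compList S v := by
  induction w with
  | nil => rfl
  | cons i w ih => simp [compList, ih, Function.comp_assoc]

lemma compList_lipschitz {X : Type*} [MetricSpace X] {N : ℕ} {S : Fin N → X → X} {K : NNReal}
    (hL : ∀ i, LipschitzWith K (S i)) (w : List (Fin N)) :
    LipschitzWith (K ^ w.length) (compList S w) := by
  induction w with
  | nil => simpa [compList] using LipschitzWith.id
  | cons i w ih =>
    have := (hL i).comp ih
    simpa [compList, pow_succ, mul_comm] using this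

lemma compList_mapsTo {X : Type*} {N : ℕ} {S : Fin N → X → X} {F : Set X}
    (h : ∀ i, Set.MapsTo (S i) F F) (w : List (Fin N)) :
    Set.MapsTo (compList S w) F F := by
  induction w with
  | nil => exact Set.mapsTo_id F
  | cons i w ih => exact (h i).comp ih

/-- The Hausdorff dimension of an inhomogeneous attractor is
`dim_H F_C = max{dim_H F_∅, dim_H C}`. -/
theorem dimH_inhomogeneous_attractor
    {X : Type*} [MetricSpace X] [CompactSpace X]
    {N : ℕ} (S : Fin N → X → X) (hS : ∀ i, IsContractionMap (S i))
    (C : Set X) (hCc : IsCompact C)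
    (F0 : Set X) (hF0c : IsCompact F0) (hF0ne : F0.Nonempty)
    (hF0 : F0 = ⋃ i, S i '' F0)
    (FC : Set X) (hFCc : IsCompact FC) (hFCne : FC.Nonempty)
    (hFC : FC = (⋃ i, S i '' FC) ∪ C) :
    dimH FC = max (dimH F0) (dimH C) := by
  classical
  -- N > 0
  have hNpos : 0 < N := by
    rcases Nat.eq_zero_or_pos N with h | h
    · subst h
      simp only [iUnion_of_empty] at hF0
      rw [hF0] at hF0ne
      exact absurd hF0ne (by simp)
    · exact h
  haveI : Nonempty (Fin N) := ⟨⟨0, hNpos⟩⟩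
  -- uniform contraction constant
  choose c hc0 hc1 hcd using hS
  set K : ℝ := Finset.univ.sup' Finset.univ_nonempty c with hKdef
  have hcK : ∀ i, c i ≤ K := fun i => Finset.le_sup' c (Finset.mem_univ i)
  have hK0 : 0 ≤ K := le_trans (hc0 ⟨0, hNpos⟩) (hcK _)
  have hK1 : K < 1 := by
    rw [hKdef]
    exact (Finset.sup'_lt_iff Finset.univ_nonempty).mpr fun i _ => hc1 i
  have hdK : ∀ i x y, dist (S i x) (S i y) ≤ K * dist x y := fun i x y =>
    le_trans (hcd i x y) (mul_le_mul_of_nonneg_right (hcK i) dist_nonneg)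
  set K0 : NNReal := ⟨K, hK0⟩ with hK0def
  have hLip : ∀ i, LipschitzWith K0 (S i) := fun i =>
    LipschitzWith.of_dist_le_mul (hdK i)
  -- Step A : F0 ⊆ FC
  have hSFC : ∀ i, Set.MapsTo (S i) FC FC := by
    intro i x hx
    rw [hFC]
    exact Or.inl (mem_iUnion.mpr ⟨i, mem_image_of_mem _ hx⟩)
  have hSF0 : ∀ i, Set.MapsTo (S i) F0 F0 := by
    intro i x hx
    rw [hF0]
    exact mem_iUnion.mpr ⟨i, mem_image_of_mem _ hx⟩
  have hsub1 : F0 ⊆ FC := by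
    obtain ⟨a0, ha0F, hmax⟩ :=
      hF0c.exists_isMaxOn hF0ne (continuous_infDist_pt FC).continuousOn
    have hD0 : infDist a0 FC = 0 := by
      have ha0F' := ha0F
      rw [hF0] at ha0F'
      obtain ⟨i, b, hbF, hab⟩ := by
        simpa only [mem_iUnion, mem_image] using ha0F'
      obtain ⟨y, hyFC, hby⟩ := hFCc.exists_infDist_eq_dist hFCne b
      have h1 : infDist a0 FC ≤ K * infDist a0 FC := by
        calc infDist a0 FC ≤ dist a0 (S i y) := infDist_le_dist_of_mem (hSFC i hyFC)
          _ = dist (S i b) (S i y) := by rw [hab]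
          _ ≤ K * dist b y := hdK i b y
          _ = K * infDist b FC := by rw [hby]
          _ ≤ K * infDist a0 FC :=
            mul_le_mul_of_nonneg_left (hmax hbF) hK0
      nlinarith [infDist_nonneg (x := a0) (s := FC)]
    intro a haF
    have : infDist a FC = 0 :=
      le_antisymm (hD0 ▸ hmax haF) infDist_nonneg
    have := (mem_closure_iff_infDist_zero hFCne).mpr this
    rwa [hFCc.isClosed.closure_eq] at this
  -- Step B : FC ⊆ F0 ∪ ⋃ w, compList S w '' C
  have hsub2 : FC ⊆ F0 ∪ ⋃ w : List (Fin N), compList S w '' C := by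
    intro x hx
    by_cases hxw : x ∈ ⋃ w : List (Fin N), compList S w '' C
    · exact Or.inr hxw
    left
    -- x lies in images of FC of arbitrary depth
    have hdepth : ∀ k : ℕ, ∃ w : List (Fin N), w.length = k ∧ x ∈ compList S w '' FC := by
      intro k
      induction k with
      | zero => exact ⟨[], rfl, ⟨x, hx, rfl⟩⟩
      | succ k ih =>
        obtain ⟨w, hlen, y, hyFC, hxy⟩ := ih
        have hy' := hyFC
        rw [hFC] at hy'
        rcases hy' with hy' | hyC
        · obtain ⟨i, z, hzFC, hz⟩ := by
            simpa only [mem_iUnion, mem_image] using hy'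
          refine ⟨w ++ [i], by simp [hlen], z, hzFC, ?_⟩
          rw [compList_append]
          simp only [Function.comp_apply]
          show compList S w (S i z) = x
          rw [hz, hxy]
        · exact absurd (mem_iUnion.mpr ⟨w, (mem_image _ _ _).mpr ⟨y, hyC, hxy⟩⟩) hxw
    -- hence infDist x F0 = 0
    obtain ⟨z', hz'F0⟩ := id hF0ne
    have hbound : ∀ k : ℕ, infDist x F0 ≤ K ^ k * diam (univ : Set X) := by
      intro k
      obtain ⟨w, hlen, z, hzFC, hxz⟩ := hdepth k
      have hmem : compList S w z' ∈ F0 := compList_mapsTo hSF0 w hz'F0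
      calc infDist x F0 ≤ dist x (compList S w z') := infDist_le_dist_of_mem hmem
        _ = dist (compList S w z) (compList S w z') := by rw [hxz]
        _ ≤ (K0 : ℝ) ^ w.length * dist z z' := by
            simpa using (compList_lipschitz hLip w).dist_le_mul z z'
        _ ≤ K ^ k * diam (univ : Set X) := by
            rw [hlen]
            exact mul_le_mul_of_nonneg_left
              (dist_le_diam_of_mem (isCompact_univ.isBounded) trivial trivial)
              (pow_nonneg hK0 k)
    have htend : Tendsto (fun k : ℕ => K ^ k * diam (univ : Set X)) atTop (nhds 0) := by
      have := tendsto_pow_atTop_nhds_zero_of_lt_one hK0 hK1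
      simpa using this.mul_const (diam (univ : Set X))
    have hle0 : infDist x F0 ≤ 0 := ge_of_tendsto htend (Eventually.of_forall hbound)
    have : infDist x F0 = 0 := le_antisymm hle0 infDist_nonneg
    have := (mem_closure_iff_infDist_zero hF0ne).mpr this
    rwa [hF0c.isClosed.closure_eq] at this
  -- conclude
  apply le_antisymm
  · calc dimH FC ≤ dimH (F0 ∪ ⋃ w : List (Fin N), compList S w '' C) := dimH_mono hsub2
      _ = max (dimH F0) (⨆ w : List (Fin N), dimH (compList S w '' C)) := by
          rw [dimH_union, dimH_iUnion]
      _ ≤ max (dimH F0) (dimH C) := by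
          refine max_le_max le_rfl (iSup_le fun w => ?_)
          exact (compList_lipschitz hLip w).dimH_image_le C
  · refine max_le (dimH_mono hsub1) (dimH_mono ?_)
    rw [hFC]; exact subset_union_right
end

section
/- Let (X,d) be a compact metric space and 𝕀 = {S_1,...,S_N} an IFS of bi-Lipschitz contractions on X, and let t > s_1, where s_1 solves ∑_{i=1}^N Lip⁺(S_i)^{s_1} = 1. Then for all δ ∈ (0,1], the δ-stopping satisfies |I(δ)| ≤ b_t · L_min^{−t} · δ^{−t}, where b_t = ∑_{𝐢∈I*} Lip⁺(S_𝐢)^t and L_min = min_{i∈I} Lip⁻(S_i). -/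
open Metric Filter Set MeasureTheory Topology

/-- `Lip⁺(S_𝐢)`, with the convention `Lip⁺(S_ω) = 1` for the empty word `ω`. -/
noncomputable def lipWord {X : Type*} [MetricSpace X] {N : ℕ} (S : Fin N → X → X)
    (w : List (Fin N)) : ℝ :=
  if w = [] then 1 else LipPlus (compList S w)

/-- The `δ`-stopping `I(δ) = {𝐢 ∈ I* : Lip⁺(S_𝐢) < δ ≤ Lip⁺(S_𝐢₋)}`. -/
noncomputable def stopping {X : Type*} [MetricSpace X] {N : ℕ} (S : Fin N → X → X)
    (δ : ℝ) : Set (List (Fin N)) :=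
  {w | w ≠ [] ∧ lipWord S w < δ ∧ δ ≤ lipWord S w.dropLast}

section Aux

variable {X : Type*} [MetricSpace X]

lemma lipPlus_le_of_bound (f : X → X) {K : ℝ} (hK : 0 ≤ K)
    (h : ∀ x y, dist (f x) (f y) ≤ K * dist x y) : LipPlus f ≤ K := by
  apply Real.sSup_le _ hK
  rintro r ⟨x, y, hxy, rfl⟩
  rw [div_le_iff₀ (dist_pos.2 hxy)]
  exact h x y

lemma bddAbove_ratio (f : X → X) {K : ℝ}
    (h : ∀ x y, dist (f x) (f y) ≤ K * dist x y) :
    BddAbove {r : ℝ | ∃ x y : X, x ≠ y ∧ r = dist (f x) (f y) / dist x y} := by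
  refine ⟨K, ?_⟩
  rintro r ⟨x, y, hxy, rfl⟩
  rw [div_le_iff₀ (dist_pos.2 hxy)]
  exact h x y

lemma le_lipPlus_of_bound [Nontrivial X] (f : X → X) {k K : ℝ}
    (hub : ∀ x y, dist (f x) (f y) ≤ K * dist x y)
    (h : ∀ x y, k * dist x y ≤ dist (f x) (f y)) : k ≤ LipPlus f := by
  obtain ⟨x, y, hxy⟩ := exists_pair_ne X
  have hd : 0 < dist x y := dist_pos.2 hxy
  calc k ≤ dist (f x) (f y) / dist x y := (le_div_iff₀ hd).2 (h x y)
    _ ≤ LipPlus f := le_csSup (bddAbove_ratio f hub) ⟨x, y, hxy, rfl⟩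

lemma lipPlus_nonneg [Nontrivial X] (f : X → X) {K : ℝ}
    (hub : ∀ x y, dist (f x) (f y) ≤ K * dist x y) : 0 ≤ LipPlus f :=
  le_lipPlus_of_bound f hub (by intro x y; rw [zero_mul]; exact dist_nonneg)

lemma mul_lipPlus_le_lipPlus_comp [Nontrivial X] {g F : X → X} {k K : ℝ}
    (hg : ∀ x y, k * dist x y ≤ dist (g x) (g y)) (hk : 0 ≤ k)
    (hcomp : ∀ x y, dist (g (F x)) (g (F y)) ≤ K * dist x y) :
    k * LipPlus F ≤ LipPlus (g ∘ F) := by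
  have hnn : 0 ≤ LipPlus (g ∘ F) := lipPlus_nonneg _ hcomp
  rcases eq_or_lt_of_le hk with h0 | hk
  · rw [← h0, zero_mul]; exact hnn
  have h1 : LipPlus F ≤ LipPlus (g ∘ F) / k := by
    apply Real.sSup_le _ (div_nonneg hnn hk.le)
    rintro r ⟨x, y, hxy, rfl⟩
    rw [le_div_iff₀ hk]
    have hd : 0 < dist x y := dist_pos.2 hxy
    have key : dist (F x) (F y) / dist x y * k ≤ dist (g (F x)) (g (F y)) / dist x y := by
      rw [div_mul_eq_mul_div, div_le_div_iff_of_pos_right hd, mul_comm]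
      exact hg _ _
    refine key.trans ?_
    exact le_csSup (bddAbove_ratio _ hcomp) ⟨x, y, hxy, rfl⟩
  calc k * LipPlus F ≤ k * (LipPlus (g ∘ F) / k) := by
        exact mul_le_mul_of_nonneg_left h1 hk.le
    _ = LipPlus (g ∘ F) := by field_simp

variable {N : ℕ} {S : Fin N → X → X}

lemma compList_dist_le (hS : ∀ i, IsBiLipContraction (S i)) :
    ∀ (w : List (Fin N)) (x y : X),
      dist (compList S w x) (compList S w y) ≤
        (w.map fun i => LipPlus (S i)).prod * dist x y
  | [], x, y => by simp [compList]
  | i :: w, x, y => by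
    have h0 : 0 ≤ LipPlus (S i) := le_of_lt (lt_of_lt_of_le (hS i).2.2.1 (hS i).2.2.2.1)
    simp only [compList, List.map_cons, List.prod_cons, Function.comp_apply]
    calc dist (S i (compList S w x)) (S i (compList S w y))
        ≤ LipPlus (S i) * dist (compList S w x) (compList S w y) := (hS i).1 _ _
      _ ≤ LipPlus (S i) * ((w.map fun i => LipPlus (S i)).prod * dist x y) :=
          mul_le_mul_of_nonneg_left (compList_dist_le hS w x y) h0
      _ = _ := by ring

lemma compList_dist_ge (hS : ∀ i, IsBiLipContraction (S i)) :
    ∀ (w : List (Fin N)) (x y : X),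
      (w.map fun i => LipMinus (S i)).prod * dist x y ≤
        dist (compList S w x) (compList S w y)
  | [], x, y => by simp [compList]
  | i :: w, x, y => by
    have h0 : 0 ≤ LipMinus (S i) := le_of_lt (hS i).2.2.1
    simp only [compList, List.map_cons, List.prod_cons, Function.comp_apply]
    calc LipMinus (S i) * (w.map fun i => LipMinus (S i)).prod * dist x y
        = LipMinus (S i) * ((w.map fun i => LipMinus (S i)).prod * dist x y) := by ring
      _ ≤ LipMinus (S i) * dist (compList S w x) (compList S w y) :=
          mul_le_mul_of_nonneg_left (compList_dist_ge hS w x y) h0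
      _ ≤ dist (S i (compList S w x)) (S i (compList S w y)) := (hS i).2.1 _ _

lemma prod_lipPlus_nonneg (hS : ∀ i, IsBiLipContraction (S i)) (w : List (Fin N)) :
    0 ≤ (w.map fun i => LipPlus (S i)).prod := by
  apply List.prod_nonneg
  intro x hx
  obtain ⟨i, _, rfl⟩ := List.mem_map.1 hx
  exact le_of_lt (lt_of_lt_of_le (hS i).2.2.1 (hS i).2.2.2.1)

lemma prod_lipMinus_pos (hS : ∀ i, IsBiLipContraction (S i)) (w : List (Fin N)) :
    0 < (w.map fun i => LipMinus (S i)).prod := by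
  apply List.prod_pos
  intro x hx
  obtain ⟨i, _, rfl⟩ := List.mem_map.1 hx
  exact (hS i).2.2.1

lemma lipPlus_compList_le (hS : ∀ i, IsBiLipContraction (S i)) (w : List (Fin N)) :
    LipPlus (compList S w) ≤ (w.map fun i => LipPlus (S i)).prod :=
  lipPlus_le_of_bound _ (prod_lipPlus_nonneg hS w) (compList_dist_le hS w)

lemma le_lipPlus_compList [Nontrivial X] (hS : ∀ i, IsBiLipContraction (S i))
    (w : List (Fin N)) :
    (w.map fun i => LipMinus (S i)).prod ≤ LipPlus (compList S w) :=
  le_lipPlus_of_bound _ (compList_dist_le hS w) (compList_dist_ge hS w)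

lemma lipPlus_compList_pos [Nontrivial X] (hS : ∀ i, IsBiLipContraction (S i))
    (w : List (Fin N)) : 0 < LipPlus (compList S w) :=
  lt_of_lt_of_le (prod_lipMinus_pos hS w) (le_lipPlus_compList hS w)

lemma lipMinus_mul_le_cons [Nontrivial X] (hS : ∀ i, IsBiLipContraction (S i))
    (i : Fin N) (w : List (Fin N)) :
    LipMinus (S i) * LipPlus (compList S w) ≤ LipPlus (compList S (i :: w)) :=
  mul_lipPlus_le_lipPlus_comp (hS i).2.1 (le_of_lt (hS i).2.2.1)
    (compList_dist_le hS (i :: w))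

end Aux

section Sums

lemma sum_tuple_prod {N : ℕ} (m : Fin N → ℝ) :
    ∀ n : ℕ, (∑ f : Fin n → Fin N, ∏ j, m (f j)) = (∑ i, m i) ^ n
  | 0 => by simp
  | n + 1 => by
    have key : ∀ p : Fin N × (Fin n → Fin N),
        (fun p : Fin N × (Fin n → Fin N) => m p.1 * ∏ j, m (p.2 j)) p
          = (fun f : Fin (n + 1) → Fin N => ∏ j, m (f j))
              ((Fin.consEquiv fun _ => Fin N) p) := by
      rintro ⟨a, f⟩
      simp [Fin.consEquiv, Fin.prod_univ_succ]
    have heq := Fintype.sum_equiv (Fin.consEquiv fun _ => Fin N)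
      (fun p : Fin N × (Fin n → Fin N) => m p.1 * ∏ j, m (p.2 j))
      (fun f : Fin (n + 1) → Fin N => ∏ j, m (f j)) key
    rw [← heq, Fintype.sum_prod_type]
    simp only [← Finset.mul_sum]
    rw [← Finset.sum_mul, sum_tuple_prod m n, pow_succ, mul_comm]

lemma summable_list_prod {N : ℕ} (m : Fin N → ℝ) (hm : ∀ i, 0 ≤ m i)
    (hc : (∑ i, m i) < 1) :
    Summable (fun w : List (Fin N) => (w.map m).prod) ∧
      (∑' w : List (Fin N), (w.map m).prod) = (1 - ∑ i, m i)⁻¹ := by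
  set c := ∑ i, m i with hcdef
  have hc0 : 0 ≤ c := Finset.sum_nonneg fun i _ => hm i
  set G : (Σ n : ℕ, Fin n → Fin N) → ℝ := fun p => ∏ j, m (p.2 j) with hG
  have hGnn : ∀ p, 0 ≤ G p := fun p => Finset.prod_nonneg fun j _ => hm _
  have hfib : ∀ n : ℕ, (∑' f : Fin n → Fin N, G ⟨n, f⟩) = c ^ n := by
    intro n
    rw [tsum_fintype]
    exact sum_tuple_prod m n
  have hGsum : Summable G := by
    rw [summable_sigma_of_nonneg hGnn]
    constructor
    · exact fun n => Summable.of_finite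
    · simp only [hfib]
      exact summable_geometric_of_lt_one hc0 hc
  have hGt : (∑' p, G p) = (1 - c)⁻¹ := by
    rw [hGsum.tsum_sigma]
    simp only [hfib]
    exact tsum_geometric_of_lt_one hc0 hc
  have he : ∀ w : List (Fin N), (w.map m).prod = G (List.equivSigmaTuple w) := by
    intro w
    conv_lhs => rw [← List.ofFn_get w]
    rw [List.map_ofFn, List.prod_ofFn]
    rfl
  have hcomp : (fun w : List (Fin N) => (w.map m).prod) = G ∘ List.equivSigmaTuple :=
    funext he
  constructor
  · rw [hcomp]
    exact (List.equivSigmaTuple.summable_iff).2 hGsum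
  · rw [hcomp]
    calc tsum (G ∘ ⇑List.equivSigmaTuple) = ∑' w, G (List.equivSigmaTuple w) := rfl
      _ = ∑' p, G p := List.equivSigmaTuple.tsum_eq G
      _ = (1 - c)⁻¹ := hGt

lemma summable_subtype_list_prod {N : ℕ} (m : Fin N → ℝ) (hm : ∀ i, 0 ≤ m i)
    (hc : (∑ i, m i) < 1) :
    Summable (fun w : {w : List (Fin N) // w ≠ []} => ((w : List (Fin N)).map m).prod) ∧
      (∑' w : {w : List (Fin N) // w ≠ []}, ((w : List (Fin N)).map m).prod)
        = (1 - ∑ i, m i)⁻¹ - 1 := by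
  classical
  obtain ⟨hsum, htsum⟩ := summable_list_prod m hm hc
  set g : List (Fin N) → ℝ := fun w => (w.map m).prod with hg
  have hsub : Summable (fun w : {w : List (Fin N) // w ≠ []} => g (w : List (Fin N))) := by
    exact hsum.subtype {w : List (Fin N) | w ≠ []}
  refine ⟨hsub, ?_⟩
  have h1 : (∑' w : List (Fin N), g w)
      = g [] + ∑' w : List (Fin N), if w = [] then 0 else g w :=
    hsum.tsum_eq_add_tsum_ite []
  have h2 : (∑' w : {w : List (Fin N) // w ≠ []}, g (w : List (Fin N)))
      = ∑' w : List (Fin N), if w = [] then 0 else g w := by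
    calc (∑' w : {w : List (Fin N) // w ≠ []}, g (w : List (Fin N)))
        = ∑' x : ↑{w : List (Fin N) | w ≠ []}, g ↑x := rfl
      _ = ∑' w : List (Fin N), ({w : List (Fin N) | w ≠ []}).indicator g w :=
          tsum_subtype {w : List (Fin N) | w ≠ []} g
      _ = ∑' w : List (Fin N), if w = [] then 0 else g w := by
          apply tsum_congr
          intro w
          by_cases hw : w = [] <;> simp [Set.indicator, hw]
  have hnil : g [] = 1 := by simp [hg]
  rw [h2]
  rw [htsum, hnil] at h1
  linarith

end Sums

lemma list_prod_rpow (t : ℝ) {N : ℕ} (m : Fin N → ℝ) (hm : ∀ i, 0 ≤ m i) :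
    ∀ w : List (Fin N), ((w.map m).prod) ^ t = (w.map fun i => m i ^ t).prod
  | [] => by simp
  | i :: w => by
    have h2 : 0 ≤ (w.map m).prod := by
      apply List.prod_nonneg
      rintro x hx
      obtain ⟨j, -, rfl⟩ := List.mem_map.1 hx
      exact hm j
    simp only [List.map_cons, List.prod_cons]
    rw [Real.mul_rpow (hm i) h2, list_prod_rpow t m hm w]

lemma prod_le_pow {N : ℕ} (L : Fin N → ℝ) {cm : ℝ} (h0 : ∀ i, 0 ≤ L i)
    (hcm : ∀ i, L i ≤ cm) (hcm0 : 0 ≤ cm) :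
    ∀ w : List (Fin N), (w.map L).prod ≤ cm ^ w.length
  | [] => by simp
  | i :: w => by
    simp only [List.map_cons, List.prod_cons, List.length_cons, pow_succ]
    have h1 := prod_le_pow L h0 hcm hcm0 w
    have h2 : 0 ≤ (w.map L).prod := by
      apply List.prod_nonneg
      rintro x hx
      obtain ⟨j, -, rfl⟩ := List.mem_map.1 hx
      exact h0 j
    calc L i * (w.map L).prod ≤ cm * cm ^ w.length :=
          mul_le_mul (hcm i) h1 h2 hcm0
      _ = cm ^ w.length * cm := mul_comm _ _


/-- **Lemma 3.4.** If `t > s₁`, then for all `δ ∈ (0,1]`,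
`|I(δ)| ≤ b_t L_min^{-t} δ^{-t}`, where `b_t = ∑_{𝐢∈I*} Lip⁺(S_𝐢)^t` and
`L_min = minᵢ Lip⁻(Sᵢ)`. -/
theorem card_stopping_le
    {X : Type*} [MetricSpace X] [CompactSpace X]
    {N : ℕ} (S : Fin N → X → X) (hS : ∀ i, IsBiLipContraction (S i))
    (s1 : ℝ) (hs1 : ∑ i, LipPlus (S i) ^ s1 = 1)
    (t : ℝ) (ht : s1 < t)
    (bt : ℝ) (hbt : bt = ∑' w : {w : List (Fin N) // w ≠ []}, LipPlus (compList S w.1) ^ t)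
    (Lmin : ℝ) (hLmin : IsLeast {r : ℝ | ∃ i : Fin N, r = LipMinus (S i)} Lmin) :
    ∀ δ : ℝ, 0 < δ → δ ≤ 1 →
      (stopping S δ).Finite ∧
      (Nat.card (stopping S δ) : ℝ) ≤ bt * Lmin ^ (-t) * δ ^ (-t) := by
  intro δ hδ0 hδ1
  classical
  rcases Nat.eq_zero_or_pos N with hN0 | hN
  · exfalso; subst hN0; simp at hs1
  haveI : Nonempty (Fin N) := ⟨⟨0, hN⟩⟩
  set i0 : Fin N := ⟨0, hN⟩
  -- X is nontrivial
  haveI hnt : Nontrivial X := by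
    by_contra hc
    rw [not_nontrivial_iff_subsingleton] at hc
    have hpos := (hS i0).2.2.1
    have hempty :
        {r : ℝ | ∃ x y : X, x ≠ y ∧ r = dist (S i0 x) (S i0 y) / dist x y} = ∅ := by
      ext r
      simp only [Set.mem_setOf_eq, Set.mem_empty_iff_false, iff_false]
      rintro ⟨x, y, hxy, -⟩
      exact hxy (Subsingleton.elim x y)
    rw [LipMinus, hempty, Real.sInf_empty] at hpos
    exact lt_irrefl 0 hpos
  -- basic constants
  have hL0 : ∀ i, 0 < LipPlus (S i) :=
    fun i => lt_of_lt_of_le (hS i).2.2.1 (hS i).2.2.2.1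
  have hL1 : ∀ i, LipPlus (S i) < 1 := fun i => (hS i).2.2.2.2
  have hl0 : ∀ i, 0 < LipMinus (S i) := fun i => (hS i).2.2.1
  have hlL : ∀ i, LipMinus (S i) ≤ LipPlus (S i) := fun i => (hS i).2.2.2.1
  have hLm0 : 0 < Lmin := by
    obtain ⟨i1, hi1⟩ := hLmin.1
    rw [hi1]; exact hl0 i1
  have hLmle : ∀ i, Lmin ≤ LipMinus (S i) := fun i => hLmin.2 ⟨i, rfl⟩
  -- exponents
  have hs1nn : 0 ≤ s1 := by
    by_contra hneg
    push_neg at hneg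
    have h1 : ∑ _i : Fin N, (1 : ℝ) < ∑ i, LipPlus (S i) ^ s1 := by
      apply Finset.sum_lt_sum_of_nonempty Finset.univ_nonempty
      intro i _
      exact (Real.one_lt_rpow_iff_of_pos (hL0 i)).2 (Or.inr ⟨hL1 i, hneg⟩)
    rw [hs1] at h1
    simp only [Finset.sum_const, Finset.card_univ, Fintype.card_fin, nsmul_eq_mul,
      mul_one] at h1
    have : (1 : ℝ) ≤ (N : ℝ) := by exact_mod_cast hN
    linarith
  have t0 : 0 ≤ t := le_of_lt (lt_of_le_of_lt hs1nn ht)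
  set c := ∑ i, LipPlus (S i) ^ t with hc
  set γ := ∑ i, LipMinus (S i) ^ t with hγ
  have hc1 : c < 1 := by
    rw [hc, ← hs1]
    apply Finset.sum_lt_sum_of_nonempty Finset.univ_nonempty
    intro i _
    exact Real.rpow_lt_rpow_of_exponent_gt (hL0 i) (hL1 i) ht
  have hγc : γ ≤ c :=
    Finset.sum_le_sum fun i _ => Real.rpow_le_rpow (hl0 i).le (hlL i) t0
  have hγ1 : γ < 1 := lt_of_le_of_lt hγc hc1
  -- summability
  obtain ⟨husum, -⟩ := summable_subtype_list_prod (fun i => LipPlus (S i) ^ t)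
    (fun i => (Real.rpow_pos_of_pos (hL0 i) t).le) hc1
  obtain ⟨hlsum, hltsum⟩ := summable_subtype_list_prod (fun i => LipMinus (S i) ^ t)
    (fun i => (Real.rpow_pos_of_pos (hl0 i) t).le) hγ1
  set fsub : {w : List (Fin N) // w ≠ []} → ℝ :=
    fun w => LipPlus (compList S w.1) ^ t with hfsub
  have hfl : ∀ w : {w : List (Fin N) // w ≠ []},
      ((w : List (Fin N)).map fun i => LipMinus (S i) ^ t).prod ≤ fsub w := by
    intro w
    rw [← list_prod_rpow t (fun i => LipMinus (S i)) (fun i => (hl0 i).le)]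
    exact Real.rpow_le_rpow (prod_lipMinus_pos hS _).le (le_lipPlus_compList hS _) t0
  have hfu : ∀ w : {w : List (Fin N) // w ≠ []},
      fsub w ≤ ((w : List (Fin N)).map fun i => LipPlus (S i) ^ t).prod := by
    intro w
    rw [← list_prod_rpow t (fun i => LipPlus (S i)) (fun i => (hL0 i).le)]
    exact Real.rpow_le_rpow (lipPlus_compList_pos hS _).le (lipPlus_compList_le hS _) t0
  have hfnn : ∀ w, 0 ≤ fsub w :=
    fun w => (Real.rpow_pos_of_pos (lipPlus_compList_pos hS _) t).le
  have hfsummable : Summable fsub := Summable.of_nonneg_of_le hfnn hfu husum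
  have hbt' : bt = ∑' w, fsub w := hbt
  have hbt0 : 0 ≤ bt := by
    rw [hbt']; exact tsum_nonneg hfnn
  have hbtlow : (1 - γ)⁻¹ - 1 ≤ bt := by
    rw [hbt', ← hltsum]
    exact Summable.tsum_le_tsum hfl hlsum hfsummable
  -- key scalar inequality
  have hkey : (N : ℝ) * Lmin ^ t * (1 + bt) ≤ bt := by
    have h1 : (N : ℝ) * Lmin ^ t ≤ γ := by
      have : ∑ _i : Fin N, Lmin ^ t ≤ γ :=
        Finset.sum_le_sum fun i _ => Real.rpow_le_rpow hLm0.le (hLmle i) t0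
      simpa [Finset.sum_const, Finset.card_univ, Fintype.card_fin, nsmul_eq_mul]
        using this
    have h3 : 0 < 1 - γ := by linarith
    have h4 : (1 - γ)⁻¹ ≤ 1 + bt := by linarith
    have h5 : 1 ≤ (1 + bt) * (1 - γ) := by
      calc (1 : ℝ) = (1 - γ)⁻¹ * (1 - γ) := (inv_mul_cancel₀ h3.ne').symm
        _ ≤ (1 + bt) * (1 - γ) := mul_le_mul_of_nonneg_right h4 h3.le
    have h2 : γ * (1 + bt) ≤ bt := by nlinarith
    calc (N : ℝ) * Lmin ^ t * (1 + bt) ≤ γ * (1 + bt) :=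
          mul_le_mul_of_nonneg_right h1 (by linarith)
      _ ≤ bt := h2
  -- length bound
  set cm := Finset.univ.sup' Finset.univ_nonempty (fun i => LipPlus (S i)) with hcm
  have hcm1 : cm < 1 := by
    rw [hcm, Finset.sup'_lt_iff]
    intro i _
    exact hL1 i
  have hcmle : ∀ i, LipPlus (S i) ≤ cm := by
    intro i
    rw [hcm]
    exact Finset.le_sup' (fun i => LipPlus (S i)) (Finset.mem_univ i)
  have hcm0 : 0 < cm := lt_of_lt_of_le (hL0 i0) (hcmle i0)
  obtain ⟨K, hK⟩ := exists_pow_lt_of_lt_one hδ0 hcm1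
  set D : Set (List (Fin N)) := {u | u ≠ [] ∧ δ ≤ LipPlus (compList S u)} with hD
  have hlenD : ∀ u ∈ D, u.length ≤ K := by
    intro u hu
    by_contra hlen
    push_neg at hlen
    have hub : δ ≤ cm ^ u.length :=
      hu.2.trans ((lipPlus_compList_le hS u).trans
        (prod_le_pow _ (fun i => (hL0 i).le) hcmle hcm0.le u))
    have : cm ^ u.length ≤ cm ^ K :=
      pow_le_pow_of_le_one hcm0.le hcm1.le hlen.le
    linarith
  have hDfin : D.Finite := (List.finite_length_le (Fin N) K).subset hlenD
  -- stopping is finite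
  have hdl : ∀ w ∈ stopping S δ, w.dropLast ≠ [] → w.dropLast ∈ D := by
    intro w hw hne
    refine ⟨hne, ?_⟩
    have h3 := hw.2.2
    rwa [lipWord, if_neg hne] at h3
  have hstopfin : (stopping S δ).Finite := by
    apply (List.finite_length_le (Fin N) (K + 1)).subset
    intro w hw
    simp only [Set.mem_setOf_eq]
    have hlw : w.dropLast.length = w.length - 1 := List.length_dropLast
    by_cases hne : w.dropLast = []
    · have : w.length - 1 = 0 := by rw [← hlw, hne]; rfl
      omega
    · have := hlenD _ (hdl w hw hne)
      omega
  refine ⟨hstopfin, ?_⟩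
  -- counting
  haveI := hstopfin.to_subtype
  haveI := hDfin.to_subtype
  set D' : Set (List (Fin N)) := insert [] D with hD'
  have hD'fin : D'.Finite := hDfin.insert []
  haveI := hD'fin.to_subtype
  have hdl' : ∀ w ∈ stopping S δ, w.dropLast ∈ D' := by
    intro w hw
    by_cases hne : w.dropLast = []
    · rw [hne]; exact Set.mem_insert _ _
    · exact Set.mem_insert_of_mem _ (hdl w hw hne)
  set Φ : ↥(stopping S δ) → ↥D' × Fin N := fun w =>
    (⟨w.1.dropLast, hdl' w.1 w.2⟩, w.1.getLast w.2.1) with hΦ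
  have hinj : Function.Injective Φ := by
    rintro ⟨a, ha⟩ ⟨b, hb⟩ hab
    have e1 : a.dropLast = b.dropLast :=
      congrArg (fun p : ↥D' × Fin N => (p.1 : List (Fin N))) hab
    have e2 : a.getLast ha.1 = b.getLast hb.1 := congrArg Prod.snd hab
    apply Subtype.ext
    calc a = a.dropLast ++ [a.getLast ha.1] := (List.dropLast_append_getLast ha.1).symm
      _ = b.dropLast ++ [b.getLast hb.1] := congrArg₂ (· ++ ·) e1 (by rw [e2])
      _ = b := List.dropLast_append_getLast hb.1
  have hcard1 : Nat.card ↥(stopping S δ) ≤ (Nat.card ↥D + 1) * N := by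
    have h := Nat.card_le_card_of_injective Φ hinj
    rw [Nat.card_prod, Nat.card_eq_fintype_card (α := Fin N), Fintype.card_fin] at h
    refine h.trans (Nat.mul_le_mul_right N ?_)
    rw [Nat.card_coe_set_eq, Nat.card_coe_set_eq]
    calc D'.ncard ≤ D.ncard + 1 := Set.ncard_insert_le _ _
      _ = D.ncard + 1 := rfl
  -- card D bound
  set F : Finset {w : List (Fin N) // w ≠ []} :=
    hDfin.toFinset.attach.map
      ⟨fun u => ⟨u.1, (hDfin.mem_toFinset.mp u.2).1⟩,
        fun u v huv => by
          apply Subtype.ext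
          have h := congrArg Subtype.val huv
          simpa using h⟩ with hF
  have hmemF : ∀ w ∈ F, w.1 ∈ D := by
    intro w hw
    simp only [hF, Finset.mem_map, Finset.mem_attach, Function.Embedding.coeFn_mk,
      true_and] at hw
    obtain ⟨u, hu⟩ := hw
    rw [← hu]
    exact hDfin.mem_toFinset.mp u.2
  have hFcard : F.card = Nat.card ↥D := by
    rw [hF, Finset.card_map, Finset.card_attach, Nat.card_coe_set_eq,
      Set.ncard_eq_toFinset_card D hDfin]
  have hsumD : (Nat.card ↥D : ℝ) * δ ^ t ≤ bt := by
    rw [hbt', ← hFcard]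
    calc (F.card : ℝ) * δ ^ t = ∑ _w ∈ F, δ ^ t := by
          rw [Finset.sum_const, nsmul_eq_mul]
      _ ≤ ∑ w ∈ F, fsub w :=
          Finset.sum_le_sum fun w hw =>
            Real.rpow_le_rpow hδ0.le (hmemF w hw).2 t0
      _ ≤ ∑' w, fsub w := Summable.sum_le_tsum F (fun w _ => hfnn w) hfsummable
  -- final arithmetic
  have hA : 0 < Lmin ^ t := Real.rpow_pos_of_pos hLm0 t
  have hB : 0 < δ ^ t := Real.rpow_pos_of_pos hδ0 t
  have hB1 : δ ^ t ≤ 1 := Real.rpow_le_one hδ0.le hδ1 t0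
  rw [Real.rpow_neg hLm0.le, Real.rpow_neg hδ0.le]
  have hgoal : (Nat.card ↥(stopping S δ) : ℝ) * (Lmin ^ t * δ ^ t) ≤ bt := by
    have hn : (Nat.card ↥(stopping S δ) : ℝ) ≤ ((Nat.card ↥D : ℝ) + 1) * N := by
      exact_mod_cast hcard1
    have hd0 : (0 : ℝ) ≤ (Nat.card ↥D : ℝ) := Nat.cast_nonneg _
    have hN1 : (1 : ℝ) ≤ (N : ℝ) := by exact_mod_cast hN
    nlinarith [mul_le_mul_of_nonneg_left hsumD (mul_nonneg (by linarith : (0:ℝ) ≤ (N:ℝ)) hA.le),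
      mul_le_mul_of_nonneg_right hn (mul_pos hA hB).le,
      mul_le_mul_of_nonneg_left hB1 (mul_nonneg (mul_nonneg (by linarith : (0:ℝ) ≤ (N:ℝ)) hA.le) hbt0)]
  calc (Nat.card ↥(stopping S δ) : ℝ)
      = (Nat.card ↥(stopping S δ) : ℝ) * (Lmin ^ t * δ ^ t) * ((Lmin ^ t)⁻¹ * (δ ^ t)⁻¹) := by
        field_simp
    _ ≤ bt * ((Lmin ^ t)⁻¹ * (δ ^ t)⁻¹) :=
        mul_le_mul_of_nonneg_right hgoal (by positivity)
    _ = bt * (Lmin ^ t)⁻¹ * (δ ^ t)⁻¹ := by ring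
end
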